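/- Let m and p be positive integers, l = 4mp + 2p + 1 and t = 4mp + 1, so that p' = (l−1)/2 = (2m+1)p. Then for every j with 1 ≤ j ≤ p': σ_j = 1 if j mod (2m+1) lies in {1, 2, …, m+1}, and σ_j = −1 if j mod (2m+1) lies in {0} ∪ {m+2, …, 2m}. -/
import Mathlib


/-- `σ_j = (-1)^{⌊(2j-1)t/l⌋}`. -/
def sigmaF (l t j : ℕ) : ℤ := (-1) ^ ((2 * j - 1) * t / l)

/-- `r(j)`: the unique integer with `r(j) ≡ (2j-1)t (mod 2l)` and `-l < r(j) < l`. -/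
def rF (l t j : ℕ) : ℤ :=
  if (((2 * j - 1) * t : ℕ) : ℤ) % (2 * l) < l then (((2 * j - 1) * t : ℕ) : ℤ) % (2 * l)
  else (((2 * j - 1) * t : ℕ) : ℤ) % (2 * l) - 2 * l

/-- `r'(j) = (|r(j)| + 1)/2`. -/
def rpF (l t j : ℕ) : ℤ := (|rF l t j| + 1) / 2

private lemma stmt6DivAux (x l Q R : ℕ) (h : x = l * Q + R) (hR : R < l) : x / l = Q := by
  subst h
  rw [Nat.mul_add_div (by omega : 0 < l), Nat.div_eq_of_lt hR, Nat.add_zero]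

theorem stmt6 (m p l t p' : ℕ) (hm : 1 ≤ m) (hp : 1 ≤ p)
    (hl : l = 4*m*p + 2*p + 1) (ht : t = 4*m*p + 1) (hp' : p' = (2*m+1)*p) :
    ∀ j : ℕ, 1 ≤ j → j ≤ p' →
      sigmaF l t j =
        if 1 ≤ j % (2*m+1) ∧ j % (2*m+1) ≤ m + 1 then 1 else -1 := by
  subst hl ht hp'
  intro j hj1 hj2
  have hmod : (2*m+1) * (j / (2*m+1)) + j % (2*m+1) = j := Nat.div_add_mod j (2*m+1)
  unfold sigmaF
  set a := j / (2*m+1) with ha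
  set s := j % (2*m+1) with hs
  have hslt : s < 2*m+1 := Nat.mod_lt _ (by omega)
  rcases Nat.eq_zero_or_pos s with hs0 | hs1
  · -- s = 0 : result is -1
    rw [if_neg (by omega)]
    have hj0 : (2*m+1) * a = j := by omega
    have ha1 : 1 ≤ a := by
      rcases Nat.eq_zero_or_pos a with h | h
      · rw [h, Nat.mul_zero] at hj0; omega
      · exact h
    have hap : a ≤ p :=
      Nat.le_of_mul_le_mul_left (show (2*m+1)*a ≤ (2*m+1)*p by omega) (by omega)
    obtain ⟨b, hb⟩ : ∃ b, a = b + 1 := ⟨a - 1, by omega⟩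
    obtain ⟨c, hc⟩ : ∃ c, m = c + 1 := ⟨m - 1, by omega⟩
    have heq : (2*(c+1)+1) * (b+1) = j := by rw [← hb, ← hc]; exact hj0
    have hx : 2*j - 1 = 4*(c*b) + 6*b + 4*c + 5 := by
      have h1 : j = 2*(c*b) + 3*b + 2*c + 3 := by rw [← heq]; ring
      omega
    have hid : (2*j-1)*(4*m*p+1)
        = (4*m*p+2*p+1) * (4*(c*b) + 4*b + 4*c + 3) + (2*b + 2 + 2*p) := by
      rw [hx, hc]; ring
    have hRlt : 2*b + 2 + 2*p < 4*m*p+2*p+1 := by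
      have hbp : b + 1 ≤ p := by omega
      nlinarith
    rw [stmt6DivAux _ _ _ _ hid hRlt]
    exact Odd.neg_one_pow ⟨2*(c*b) + 2*b + 2*c + 1, by ring⟩
  · have hap : a < p :=
      Nat.lt_of_mul_lt_mul_left (a := 2*m+1) (show (2*m+1)*a < (2*m+1)*p by omega)
    rcases le_or_gt s (m+1) with hsle | hsgt
    · -- 1 ≤ s ≤ m+1 : result is 1
      rw [if_pos (by omega)]
      obtain ⟨e, hse⟩ : ∃ e, s = e + 1 := ⟨s - 1, by omega⟩
      obtain ⟨f, hmf⟩ : ∃ f, m = e + f := ⟨m - e, by omega⟩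
      have heq : (2*(e+f)+1) * a + e + 1 = j := by
        rw [← hmf]; omega
      have hx : 2*j - 1 = 4*(e*a) + 4*(f*a) + 2*a + 2*e + 1 := by
        have h1 : j = 2*(e*a) + 2*(f*a) + a + e + 1 := by rw [← heq]; ring
        omega
      have hid : (2*j-1)*(4*m*p+1)
          = (4*m*p+2*p+1) * (4*(e*a) + 4*(f*a) + 2*e) + (2*a + 1 + 4*(p*f)) := by
        rw [hx, hmf]; ring
      have hRlt : 2*a + 1 + 4*(p*f) < 4*m*p+2*p+1 := by
        have : a + 1 ≤ p := by omega
        nlinarith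
      rw [stmt6DivAux _ _ _ _ hid hRlt]
      exact Even.neg_one_pow ⟨2*(e*a) + 2*(f*a) + e, by ring⟩
    · -- m+2 ≤ s ≤ 2m : result is -1
      rw [if_neg (by omega)]
      obtain ⟨g, hsg⟩ : ∃ g, s = m + 2 + g := ⟨s - (m+2), by omega⟩
      obtain ⟨h, hmh⟩ : ∃ h, m = g + 2 + h := ⟨m - 2 - g, by omega⟩
      have heq : (2*(g+h+2)+1) * a + (2*g + h + 4) = j := by
        have : m = g + h + 2 := by omega
        rw [← this]; omega
      have hx : 2*j - 1 = 4*(g*a) + 4*(h*a) + 10*a + 4*g + 2*h + 7 := by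
        have h1 : j = 2*(g*a) + 2*(h*a) + 5*a + 2*g + h + 4 := by rw [← heq]; ring
        omega
      have hm2 : m = g + h + 2 := by omega
      have hid : (2*j-1)*(4*m*p+1)
          = (4*m*p+2*p+1) * (4*(g*a) + 4*(h*a) + 8*a + 4*g + 2*h + 5)
            + (2*a + 2 + 4*(p*h) + 6*p) := by
        rw [hx, hm2]; ring
      have hRlt : 2*a + 2 + 4*(p*h) + 6*p < 4*m*p+2*p+1 := by
        have : a + 1 ≤ p := by omega
        nlinarith [hm2]
      rw [stmt6DivAux _ _ _ _ hid hRlt]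
      exact Odd.neg_one_pow ⟨2*(g*a) + 2*(h*a) + 4*a + 2*g + h + 2, by ring⟩
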